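/- Let (T, 𝒯) and (S, 𝒮) be measurable spaces, let μ be a probability measure on T, and let κ, η be Markov kernels from T to S. Let ε ≥ 0 and δ ≥ 0, and suppose there is a measurable set G ⊆ T with μ(Gᶜ) ≤ δ such that for every z ∈ G the measures κ(z) and η(z) are (ε,δ)-indistinguishable: for all measurable A ⊆ S, κ(z)(A) ≤ e^ε·η(z)(A) + δ and η(z)(A) ≤ e^ε·κ(z)(A) + δ. Then the mixtures μ.bind κ and μ.bind η are (ε, 2δ)-indistinguishable: for all measurable A ⊆ S, (μ.bind κ)(A) ≤ e^ε·(μ.bind η)(A) + 2δ and (μ.bind η)(A) ≤ e^ε·(μ.bind κ)(A) + 2δ. -/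

import Mathlib

open MeasureTheory ProbabilityTheory

lemma aux_one_side
    {T S : Type*} [MeasurableSpace T] [MeasurableSpace S]
    (μ : Measure T) [IsProbabilityMeasure μ]
    (κ η : ProbabilityTheory.Kernel T S) [IsMarkovKernel κ] [IsMarkovKernel η]
    (ε δ : ℝ) (hδ : 0 ≤ δ)
    (G : Set T) (hG : MeasurableSet G) (hGc : μ Gᶜ ≤ ENNReal.ofReal δ)
    (A : Set S) (hA : MeasurableSet A)
    (h : ∀ z ∈ G, κ z A ≤ ENNReal.ofReal (Real.exp ε) * η z A + ENNReal.ofReal δ) :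
    (μ.bind κ) A ≤ ENNReal.ofReal (Real.exp ε) * (μ.bind η) A + ENNReal.ofReal (2 * δ) := by
  have hκ : (μ.bind κ) A = ∫⁻ z, κ z A ∂μ :=
    Measure.bind_apply hA (Kernel.measurable κ).aemeasurable
  have hη : (μ.bind η) A = ∫⁻ z, η z A ∂μ :=
    Measure.bind_apply hA (Kernel.measurable η).aemeasurable
  rw [hκ, hη]
  rw [← lintegral_add_compl (fun z => κ z A) hG]
  have h1 : ∫⁻ z in G, κ z A ∂μ ≤
      ENNReal.ofReal (Real.exp ε) * ∫⁻ z, η z A ∂μ + ENNReal.ofReal δ := by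
    calc ∫⁻ z in G, κ z A ∂μ
        ≤ ∫⁻ z in G, (ENNReal.ofReal (Real.exp ε) * η z A + ENNReal.ofReal δ) ∂μ := by
          refine setLIntegral_mono' hG fun z hz => h z hz
      _ = ENNReal.ofReal (Real.exp ε) * ∫⁻ z in G, η z A ∂μ + ENNReal.ofReal δ * μ G := by
          rw [lintegral_add_right _ measurable_const, lintegral_const_mul _
            ((Kernel.measurable_coe η hA)), lintegral_const]
          simp [Measure.restrict_apply_univ]
      _ ≤ ENNReal.ofReal (Real.exp ε) * ∫⁻ z, η z A ∂μ + ENNReal.ofReal δ * 1 := by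
          gcongr
          · exact Measure.restrict_le_self
          · exact prob_le_one
      _ = ENNReal.ofReal (Real.exp ε) * ∫⁻ z, η z A ∂μ + ENNReal.ofReal δ := by rw [mul_one]
  have h2 : ∫⁻ z in Gᶜ, κ z A ∂μ ≤ ENNReal.ofReal δ := by
    calc ∫⁻ z in Gᶜ, κ z A ∂μ ≤ ∫⁻ _ in Gᶜ, 1 ∂μ := by
          refine setLIntegral_mono' hG.compl fun z _ => prob_le_one
      _ = μ Gᶜ := by simp
      _ ≤ ENNReal.ofReal δ := hGc
  calc ∫⁻ z in G, κ z A ∂μ + ∫⁻ z in Gᶜ, κ z A ∂μ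
      ≤ (ENNReal.ofReal (Real.exp ε) * ∫⁻ z, η z A ∂μ + ENNReal.ofReal δ) + ENNReal.ofReal δ :=
        add_le_add h1 h2
    _ = ENNReal.ofReal (Real.exp ε) * ∫⁻ z, η z A ∂μ + ENNReal.ofReal (2 * δ) := by
        rw [two_mul, ENNReal.ofReal_add hδ hδ, add_assoc]

theorem bind_indistinguishable_of_ae_indistinguishable
    {T S : Type*} [MeasurableSpace T] [MeasurableSpace S]
    (μ : Measure T) [IsProbabilityMeasure μ]
    (κ η : ProbabilityTheory.Kernel T S) [IsMarkovKernel κ] [IsMarkovKernel η]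
    (ε δ : ℝ) (hε : 0 ≤ ε) (hδ : 0 ≤ δ)
    (G : Set T) (hG : MeasurableSet G) (hGc : μ Gᶜ ≤ ENNReal.ofReal δ)
    (hind : ∀ z ∈ G, ∀ A : Set S, MeasurableSet A →
      κ z A ≤ ENNReal.ofReal (Real.exp ε) * η z A + ENNReal.ofReal δ ∧
      η z A ≤ ENNReal.ofReal (Real.exp ε) * κ z A + ENNReal.ofReal δ) :
    ∀ A : Set S, MeasurableSet A →
      (μ.bind κ) A ≤ ENNReal.ofReal (Real.exp ε) * (μ.bind η) A + ENNReal.ofReal (2 * δ) ∧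
      (μ.bind η) A ≤ ENNReal.ofReal (Real.exp ε) * (μ.bind κ) A + ENNReal.ofReal (2 * δ) := by
  intro A hA
  exact ⟨aux_one_side μ κ η ε δ hδ G hG hGc A hA fun z hz => (hind z hz A hA).1,
    aux_one_side μ η κ ε δ hδ G hG hGc A hA fun z hz => (hind z hz A hA).2⟩
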